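/- Let ρ_z be the permutation of ℕ associated to the binary sequence z as follows: for every j with z(j) = 1 and every odd prime p, ρ_z swaps p^{j+2} and p^{j+2}+1, fixing everything else. Then for any two distinct binary sequences z, z', the permutations ρ_z and ρ_{z'} differ in infinitely many positions, and at every position n where they differ, |ρ_z(n) − ρ_{z'}(n)| = 1. -/
import Mathlib


open Classical in
/-- The permutation associated to a binary sequence z: for each j with z j = true and
each odd prime p, swap p^(j+2) with p^(j+2) + 1; fix everything else. -/
noncomputable def rhoZ (z : ℕ → Bool) (n : ℕ) : ℕ :=
  if ∃ p j : ℕ, p.Prime ∧ Odd p ∧ z j = true ∧ n = p ^ (j + 2) then n + 1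
  else if ∃ p j : ℕ, p.Prime ∧ Odd p ∧ z j = true ∧ n = p ^ (j + 2) + 1 then n - 1
  else n

lemma rhoZ_pow_unique {p q j k : ℕ} (hp : p.Prime) (hq : q.Prime)
    (h : p ^ (j + 2) = q ^ (k + 2)) : p = q ∧ j = k := by
  have hdvd : p ∣ q ^ (k + 2) := h ▸ dvd_pow_self p (by omega)
  have hpq : p = q := (Nat.prime_dvd_prime_iff_eq hp hq).mp (hp.dvd_of_dvd_pow hdvd)
  subst hpq
  have := Nat.pow_right_injective hp.two_le h
  exact ⟨rfl, by omega⟩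

lemma rhoZ_cases (z : ℕ → Bool) (n : ℕ) :
    rhoZ z n = n ∨ (rhoZ z n = n + 1 ∧ n % 2 = 1) ∨
      (rhoZ z n = n - 1 ∧ n % 2 = 0 ∧ 1 ≤ n) := by
  unfold rhoZ
  split_ifs with h1 h2
  · right; left; refine ⟨rfl, ?_⟩
    obtain ⟨p, j, hp, hop, -, rfl⟩ := h1
    have : Odd (p ^ (j + 2)) := hop.pow
    rw [Nat.odd_iff] at this
    omega
  · right; right
    obtain ⟨p, j, hp, hop, -, rfl⟩ := h2
    have : Odd (p ^ (j + 2)) := hop.pow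
    rw [Nat.odd_iff] at this
    exact ⟨rfl, by omega, by omega⟩
  · left; rfl

lemma rhoZ_diff_one (z z' : ℕ → Bool) (n : ℕ) (hne : rhoZ z n ≠ rhoZ z' n) :
    ((rhoZ z n : ℤ) - (rhoZ z' n : ℤ)).natAbs = 1 := by
  have h1 := rhoZ_cases z n
  have h2 := rhoZ_cases z' n
  omega

/-- If z and z' disagree at j, they differ at p^(j+2) for any odd prime p. -/
lemma rhoZ_mem_diff {z z' : ℕ → Bool} {j : ℕ} (hz : z j = true) (hz' : z' j = false)
    {p : ℕ} (hp : p.Prime) (hop : Odd p) :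
    rhoZ z (p ^ (j + 2)) ≠ rhoZ z' (p ^ (j + 2)) := by
  have hA : rhoZ z (p ^ (j + 2)) = p ^ (j + 2) + 1 := by
    unfold rhoZ
    rw [if_pos ⟨p, j, hp, hop, hz, rfl⟩]
  have hB : rhoZ z' (p ^ (j + 2)) = p ^ (j + 2) := by
    unfold rhoZ
    rw [if_neg, if_neg]
    · rintro ⟨q, k, hq, hoq, hzk, hn⟩
      have hoddn : Odd (p ^ (j + 2)) := hop.pow
      have hoddq : Odd (q ^ (k + 2)) := hoq.pow
      rw [Nat.odd_iff] at hoddn hoddq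
      omega
    · rintro ⟨q, k, hq, hoq, hzk, hn⟩
      obtain ⟨rfl, rfl⟩ := rhoZ_pow_unique hp hq hn
      rw [hz'] at hzk
      exact Bool.false_ne_true hzk
  omega

/-- For distinct binary sequences z, z', the permutations rhoZ z and rhoZ z' differ in
infinitely many positions, and wherever they differ the values differ by exactly 1. -/
theorem rhoZ_infinitely_colliding (z z' : ℕ → Bool) (hzz : z ≠ z') :
    {n : ℕ | rhoZ z n ≠ rhoZ z' n}.Infinite ∧
      ∀ n : ℕ, rhoZ z n ≠ rhoZ z' n →
        ((rhoZ z n : ℤ) - (rhoZ z' n : ℤ)).natAbs = 1 := by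
  refine ⟨?_, fun n hn => rhoZ_diff_one z z' n hn⟩
  obtain ⟨j, hj⟩ : ∃ j, z j ≠ z' j := by
    by_contra h
    push_neg at h
    exact hzz (funext h)
  have key : ∀ p : ℕ, p.Prime → Odd p → rhoZ z (p ^ (j + 2)) ≠ rhoZ z' (p ^ (j + 2)) := by
    intro p hp hop
    rcases Bool.eq_false_or_eq_true (z j) with h | h
    · have h' : z' j = false := by
        cases hc : z' j
        · rfl
        · rw [h, hc] at hj; exact absurd rfl hj
      exact rhoZ_mem_diff h h' hp hop
    · have h' : z' j = true := by
        cases hc : z' j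
        · rw [h, hc] at hj; exact absurd rfl hj
        · rfl
      exact (rhoZ_mem_diff h' h hp hop).symm
  apply Set.infinite_of_not_bddAbove
  rintro ⟨N, hN⟩
  obtain ⟨p, hpN, hp⟩ := Nat.exists_infinite_primes (max 3 (N + 1))
  have hop : Odd p := hp.odd_of_ne_two (by omega)
  have hmem : p ^ (j + 2) ∈ {n : ℕ | rhoZ z n ≠ rhoZ z' n} := key p hp hop
  have hle := hN hmem
  have : p ≤ p ^ (j + 2) := Nat.le_self_pow (by omega) p
  omega
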